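/- Let K, L be convex bodies in ℝ^{n+1}. The Minkowski mixed-volume inequality V_{(1)}(K,L)^{n+1} ≥ Vol(K)^n · Vol(L) holds, where V_{(1)}(K,L) is the first mixed volume defined via Vol((1−t)K + tL) = Σ_{k=0}^{n+1} C(n+1,k)(1−t)^{n+1−k} t^k V_{(k)}(K,L). -/

import Mathlib

open scoped Pointwise ENNReal NNReal
open MeasureTheory Set Filter


lemma oneDim_compact {A B : Set ℝ} (hA : IsCompact A) (hB : IsCompact B)
    (hAne : A.Nonempty) (hBne : B.Nonempty) :
    volume A + volume B ≤ volume (A + B) := by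
  set a := sSup A with ha
  set b := sInf B with hb
  have haA : a ∈ A := hA.sSup_mem hAne
  have hbB : b ∈ B := hB.sInf_mem hBne
  set X : Set ℝ := b +ᵥ A with hXdef
  set Y : Set ℝ := a +ᵥ B with hYdef
  have hXsub : X ⊆ A + B := by
    rintro _ ⟨x, hx, rfl⟩
    exact ⟨x, hx, b, hbB, add_comm x b⟩
  have hYsub : Y ⊆ A + B := by
    rintro _ ⟨y, hy, rfl⟩
    exact ⟨a, haA, y, hy, rfl⟩
  have hinter : X ∩ Y ⊆ {a + b} := by
    rintro z ⟨⟨x, hx, rfl⟩, ⟨y, hy, hyz⟩⟩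
    have hxa : x ≤ a := le_csSup hA.bddAbove hx
    have hby : b ≤ y := csInf_le hB.bddBelow hy
    have h1 : a + y = b + x := hyz
    have hxeq : x = a := by nlinarith
    simp [hxeq, hxa, add_comm]
  have hYm : MeasurableSet Y := (hB.vadd a).isClosed.measurableSet
  have hXY : volume (X ∪ Y) + volume (X ∩ Y) = volume X + volume Y :=
    measure_union_add_inter X hYm
  have hz : volume (X ∩ Y) = 0 :=
    le_antisymm (le_trans (measure_mono hinter) (by simp)) (zero_le)
  calc volume A + volume B = volume X + volume Y := by
        rw [hXdef, hYdef, measure_vadd, measure_vadd]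
    _ = volume (X ∪ Y) := by rw [← hXY, hz, add_zero]
    _ ≤ volume (A + B) := measure_mono (union_subset hXsub hYsub)

lemma oneDim_meas {A B : Set ℝ} (hA : MeasurableSet A) (hB : MeasurableSet B)
    (hAne : A.Nonempty) (hBne : B.Nonempty) :
    volume A + volume B ≤ volume (A + B) := by
  obtain ⟨a, haA⟩ := hAne
  obtain ⟨b, hbB⟩ := hBne
  rcases eq_or_ne (volume A) ∞ with hAinf | hAfin
  · have : (b +ᵥ A : Set ℝ) ⊆ A + B := by
      rintro _ ⟨x, hx, rfl⟩; exact ⟨x, hx, b, hbB, add_comm x b⟩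
    have : volume (A + B) = ∞ := by
      refine top_le_iff.mp ?_
      calc (∞ : ℝ≥0∞) = volume (b +ᵥ A) := by rw [measure_vadd, hAinf]
        _ ≤ _ := measure_mono this
    simp [this]
  rcases eq_or_ne (volume B) ∞ with hBinf | hBfin
  · have : (a +ᵥ B : Set ℝ) ⊆ A + B := by
      rintro _ ⟨y, hy, rfl⟩; exact ⟨a, haA, y, hy, rfl⟩
    have : volume (A + B) = ∞ := by
      refine top_le_iff.mp ?_
      calc (∞ : ℝ≥0∞) = volume (a +ᵥ B) := by rw [measure_vadd, hBinf]
        _ ≤ _ := measure_mono this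
    simp [this]
  refine ENNReal.le_of_forall_pos_le_add fun ε hε _ => ?_
  have hε2 : ((ε : ℝ≥0∞) / 2) ≠ 0 := by
    simp [ENNReal.div_eq_zero_iff, (by exact_mod_cast hε.ne' : (ε:ℝ≥0∞) ≠ 0)]
  obtain ⟨KA, hKAsub, hKAc, hKA⟩ := hA.exists_isCompact_lt_add hAfin hε2
  obtain ⟨KB, hKBsub, hKBc, hKB⟩ := hB.exists_isCompact_lt_add hBfin hε2
  have hKA' : IsCompact (KA ∪ {a}) := hKAc.union isCompact_singleton
  have hKB' : IsCompact (KB ∪ {b}) := hKBc.union isCompact_singleton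
  have hKAsub' : KA ∪ {a} ⊆ A := union_subset hKAsub (by simpa using haA)
  have hKBsub' : KB ∪ {b} ⊆ B := union_subset hKBsub (by simpa using hbB)
  have key := oneDim_compact hKA' hKB' (by simp) (by simp)
  calc volume A + volume B
      ≤ (volume (KA ∪ {a}) + ε/2) + (volume (KB ∪ {b}) + ε/2) := by
        have h1 : volume A ≤ volume (KA ∪ {a}) + ↑ε/2 :=
          hKA.le.trans (add_le_add_left (measure_mono subset_union_left) _)
        have h2 : volume B ≤ volume (KB ∪ {b}) + ↑ε/2 :=
          hKB.le.trans (add_le_add_left (measure_mono subset_union_left) _)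
        exact add_le_add h1 h2
    _ = (volume (KA ∪ {a}) + volume (KB ∪ {b})) + ε := by
        rw [add_add_add_comm, ENNReal.add_halves]
    _ ≤ volume ((KA ∪ {a}) + (KB ∪ {b})) + ε := by gcongr
    _ ≤ volume (A + B) + ε := by
        exact add_le_add_left (measure_mono (add_subset_add hKAsub' hKBsub')) _

lemma volume_smul_real (c : ℝ) (hc : 0 ≤ c) (A : Set ℝ) :
    volume (c • A) = ENNReal.ofReal c * volume A := by
  rw [Measure.addHaar_smul]
  simp [Module.finrank_self, abs_of_nonneg hc]

lemma oneDim_scaled {t : ℝ} (ht0 : 0 < t) (ht1 : t < 1) {A B : Set ℝ}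
    (hA : MeasurableSet A) (hB : MeasurableSet B) (hAne : A.Nonempty) (hBne : B.Nonempty) :
    ENNReal.ofReal (1-t) * volume A + ENNReal.ofReal t * volume B
      ≤ volume ((1-t) • A + t • B) := by
  have h1t : (0:ℝ) < 1 - t := by linarith
  have hAm : MeasurableSet ((1-t) • A) := hA.const_smul₀ (1-t)
  have hBm : MeasurableSet (t • B) := hB.const_smul₀ t
  have key := oneDim_meas hAm hBm (hAne.smul_set) (hBne.smul_set)
  rwa [volume_smul_real _ h1t.le, volume_smul_real _ ht0.le] at key

lemma layercake_aux (F : ℝ → ℝ≥0∞) (hF : Measurable F) (hF1 : ∀ x, F x ≤ 1) :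
    ∫⁻ x, F x = ∫⁻ u in Ioo (0:ℝ) 1, volume {x | ENNReal.ofReal u < F x} := by
  have hFne : ∀ x, F x ≠ ∞ := fun x => (lt_of_le_of_lt (hF1 x) (by simp)).ne
  have h1 : ∫⁻ x, F x = ∫⁻ x, ENNReal.ofReal ((F x).toReal) := by
    apply lintegral_congr
    intro x
    rw [ENNReal.ofReal_toReal (hFne x)]
  rw [h1, lintegral_eq_lintegral_meas_lt volume
    (Eventually.of_forall fun x => ENNReal.toReal_nonneg) hF.ennreal_toReal.aemeasurable]
  have h2 : ∫⁻ u in Ioi (0:ℝ), volume {x | u < (F x).toReal}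
      = ∫⁻ u in Ioi (0:ℝ), volume {x | ENNReal.ofReal u < F x} := by
    apply setLIntegral_congr_fun measurableSet_Ioi
    refine fun u hu => ?_
    dsimp only
    congr 1
    ext x
    simp only [mem_setOf_eq]
    rw [ENNReal.ofReal_lt_iff_lt_toReal (le_of_lt hu) (hFne x)]
  rw [h2, ← Ioo_union_Ici_eq_Ioi (zero_lt_one (α := ℝ)), lintegral_union measurableSet_Ici
    (by rw [Set.disjoint_left]; intro u hu hu'; exact absurd hu.2 (not_lt.mpr hu'))]
  have h3 : ∫⁻ u in Ici (1:ℝ), volume {x | ENNReal.ofReal u < F x} = 0 := by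
    rw [setLIntegral_congr_fun measurableSet_Ici
      (fun u hu => ?_), lintegral_zero]
    have : {x | ENNReal.ofReal u < F x} = ∅ := by
      ext x
      simp only [mem_setOf_eq, mem_empty_iff_false, iff_false, not_lt]
      exact (hF1 x).trans (ENNReal.one_le_ofReal.mpr hu)
    rw [this, measure_empty]
  rw [h3, add_zero]

lemma oneDim_PL_core {t : ℝ} (ht0 : 0 < t) (ht1 : t < 1) (f g h : ℝ → ℝ≥0∞)
    (hf : Measurable f) (hg : Measurable g) (hh : Measurable h)
    (hfs : ⨆ x, f x = 1) (hgs : ⨆ x, g x = 1)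
    (hyp : ∀ x y, f x ^ (1-t) * g y ^ t ≤ h ((1-t)*x + t*y)) :
    ENNReal.ofReal (1-t) * (∫⁻ x, f x) + ENNReal.ofReal t * (∫⁻ x, g x) ≤ ∫⁻ x, h x := by
  have h1t : (0:ℝ) < 1 - t := by linarith
  have hf1 : ∀ x, f x ≤ 1 := fun x => hfs ▸ le_iSup f x
  have hg1 : ∀ x, g x ≤ 1 := fun x => hgs ▸ le_iSup g x
  set h' : ℝ → ℝ≥0∞ := fun z => min (h z) 1 with hh'def
  have hh' : Measurable h' := hh.min measurable_const
  have hh'1 : ∀ z, h' z ≤ 1 := fun z => min_le_right _ _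
  have hyp' : ∀ x y, f x ^ (1-t) * g y ^ t ≤ h' ((1-t)*x + t*y) := by
    intro x y
    refine le_min (hyp x y) ?_
    exact mul_le_one' (ENNReal.rpow_le_one (hf1 x) h1t.le) (ENNReal.rpow_le_one (hg1 y) ht0.le)
  -- level sets
  set Af : ℝ → Set ℝ := fun u => {x | ENNReal.ofReal u < f x} with hAfdef
  set Bg : ℝ → Set ℝ := fun u => {x | ENNReal.ofReal u < g x} with hBgdef
  set Ch : ℝ → Set ℝ := fun u => {x | ENNReal.ofReal u < h' x} with hChdef
  have hAfm : ∀ u, MeasurableSet (Af u) := fun u => hf measurableSet_Ioi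
  have hBgm : ∀ u, MeasurableSet (Bg u) := fun u => hg measurableSet_Ioi
  have key : ∀ u ∈ Ioo (0:ℝ) 1,
      ENNReal.ofReal (1-t) * volume (Af u) + ENNReal.ofReal t * volume (Bg u)
        ≤ volume (Ch u) := by
    intro u hu
    have hu0 : ENNReal.ofReal u ≠ 0 := by simp [ENNReal.ofReal_pos.mpr hu.1, ne_of_gt]
    have hu1 : ENNReal.ofReal u < 1 := ENNReal.ofReal_lt_one.mpr hu.2
    have hAfne : (Af u).Nonempty := by
      obtain ⟨x, hx⟩ := lt_iSup_iff.mp (hfs ▸ hu1)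
      exact ⟨x, hx⟩
    have hBgne : (Bg u).Nonempty := by
      obtain ⟨y, hy⟩ := lt_iSup_iff.mp (hgs ▸ hu1)
      exact ⟨y, hy⟩
    have incl : (1-t) • Af u + t • Bg u ⊆ Ch u := by
      rintro z ⟨p, ⟨x, hx, rfl⟩, q, ⟨y, hy, rfl⟩, rfl⟩
      have hz : ENNReal.ofReal u < f x ^ (1-t) * g y ^ t := by
        have e1 : ENNReal.ofReal u = (ENNReal.ofReal u) ^ (1-t) * (ENNReal.ofReal u) ^ t := by
          rw [← ENNReal.rpow_add _ _ hu0 (by simp), sub_add_cancel, ENNReal.rpow_one]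
        rw [e1]
        calc (ENNReal.ofReal u) ^ (1-t) * (ENNReal.ofReal u) ^ t
            < f x ^ (1-t) * (ENNReal.ofReal u) ^ t := by
              apply ENNReal.mul_lt_mul_left (a := (ENNReal.ofReal u) ^ t) ?_ ?_ ?_
              · exact (ENNReal.rpow_pos (lt_of_le_of_ne (zero_le) (Ne.symm hu0)) (by simp)).ne'
              · exact (ENNReal.rpow_lt_top_of_nonneg ht0.le (by simp)).ne
              · exact ENNReal.rpow_lt_rpow hx h1t

          _ < f x ^ (1-t) * g y ^ t := by
              apply ENNReal.mul_lt_mul_right ?_ ?_ (ENNReal.rpow_lt_rpow hy ht0)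
              · exact (ENNReal.rpow_pos (lt_of_le_of_lt (zero_le) hx)
                  (lt_of_le_of_lt (hf1 x) (by simp)).ne).ne'
              · exact (ENNReal.rpow_lt_top_of_nonneg h1t.le
                  ((lt_of_le_of_lt (hf1 x) (by simp)).ne)).ne
      exact lt_of_lt_of_le hz (by simpa using hyp' x y)
    calc ENNReal.ofReal (1-t) * volume (Af u) + ENNReal.ofReal t * volume (Bg u)
        ≤ volume ((1-t) • Af u + t • Bg u) :=
          oneDim_scaled ht0 ht1 (hAfm u) (hBgm u) hAfne hBgne
      _ ≤ volume (Ch u) := measure_mono incl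
  -- assemble
  have hAfanti : Antitone fun u => volume (Af u) := by
    intro u v huv
    exact measure_mono fun x hx => lt_of_le_of_lt (ENNReal.ofReal_le_ofReal huv) hx
  have hBganti : Antitone fun u => volume (Bg u) := by
    intro u v huv
    exact measure_mono fun x hx => lt_of_le_of_lt (ENNReal.ofReal_le_ofReal huv) hx
  have hChanti : Antitone fun u => volume (Ch u) := by
    intro u v huv
    exact measure_mono fun x hx => lt_of_le_of_lt (ENNReal.ofReal_le_ofReal huv) hx
  calc ENNReal.ofReal (1-t) * (∫⁻ x, f x) + ENNReal.ofReal t * (∫⁻ x, g x)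
      = ENNReal.ofReal (1-t) * (∫⁻ u in Ioo (0:ℝ) 1, volume (Af u))
        + ENNReal.ofReal t * (∫⁻ u in Ioo (0:ℝ) 1, volume (Bg u)) := by
        simp only [hAfdef, hBgdef]
        rw [← layercake_aux f hf hf1, ← layercake_aux g hg hg1]
    _ = ∫⁻ u in Ioo (0:ℝ) 1,
        (ENNReal.ofReal (1-t) * volume (Af u) + ENNReal.ofReal t * volume (Bg u)) := by
        rw [lintegral_add_left (by exact (hAfanti.measurable).const_mul _),
          lintegral_const_mul _ hAfanti.measurable, lintegral_const_mul _ hBganti.measurable]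
    _ ≤ ∫⁻ u in Ioo (0:ℝ) 1, volume (Ch u) := setLIntegral_mono hChanti.measurable key
    _ ≤ ∫⁻ x, h' x := by
        simp only [hChdef]
        exact (layercake_aux h' hh' hh'1).ge
    _ ≤ ∫⁻ x, h x := lintegral_mono fun z => min_le_left _ _

lemma ennreal_amgm {t : ℝ} (ht0 : 0 < t) (ht1 : t < 1) (a b : ℝ≥0∞)
    (ha : a ≠ ∞) (hb : b ≠ ∞) :
    a ^ (1-t) * b ^ t ≤ ENNReal.ofReal (1-t) * a + ENNReal.ofReal t * b := by
  have h1t : (0:ℝ) < 1 - t := by linarith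
  lift a to ℝ≥0 using ha
  lift b to ℝ≥0 using hb
  set w1 : ℝ≥0 := ⟨1-t, h1t.le⟩ with hw1
  set w2 : ℝ≥0 := ⟨t, ht0.le⟩ with hw2
  have key := NNReal.geom_mean_le_arith_mean2_weighted (w₁ := w1) (w₂ := w2)
    (p₁ := a) (p₂ := b) (NNReal.eq (show (1 - t) + t = ((1:ℝ≥0):ℝ) by simp))
  have e1 : ENNReal.ofReal (1-t) = (w1 : ℝ≥0∞) := ENNReal.ofReal_eq_coe_nnreal h1t.le
  have e2 : ENNReal.ofReal t = (w2 : ℝ≥0∞) := ENNReal.ofReal_eq_coe_nnreal ht0.le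
  have c1 : ((1:ℝ) - t) = (w1 : ℝ) := rfl
  have c2 : (t : ℝ) = (w2 : ℝ) := rfl
  rw [e1, e2, c1, c2, ← ENNReal.coe_rpow_of_nonneg _ (by positivity : (0:ℝ) ≤ (w1:ℝ)),
    ← ENNReal.coe_rpow_of_nonneg _ (by positivity : (0:ℝ) ≤ (w2:ℝ)),
    ← ENNReal.coe_mul, ← ENNReal.coe_mul, ← ENNReal.coe_mul, ← ENNReal.coe_add]
  exact_mod_cast key

lemma oneDim_PL_bdd {t : ℝ} (ht0 : 0 < t) (ht1 : t < 1) (f g h : ℝ → ℝ≥0∞)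
    (hf : Measurable f) (hg : Measurable g) (hh : Measurable h)
    (hSf : (⨆ x, f x) ≠ ∞) (hSg : (⨆ x, g x) ≠ ∞)
    (hyp : ∀ x y, f x ^ (1-t) * g y ^ t ≤ h ((1-t)*x + t*y)) :
    (∫⁻ x, f x) ^ (1-t) * (∫⁻ x, g x) ^ t ≤ ∫⁻ x, h x := by
  have h1t : (0:ℝ) < 1 - t := by linarith
  set Sf := ⨆ x, f x with hSfdef
  set Sg := ⨆ x, g x with hSgdef
  rcases eq_or_ne Sf 0 with hSf0 | hSf0
  · have : ∀ x, f x = 0 := fun x => le_antisymm (hSf0 ▸ le_iSup f x) (zero_le)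
    have hint : ∫⁻ x, f x = 0 := by simp [this]
    rw [hint, ENNReal.zero_rpow_of_pos h1t, zero_mul]
    exact zero_le
  rcases eq_or_ne Sg 0 with hSg0 | hSg0
  · have : ∀ x, g x = 0 := fun x => le_antisymm (hSg0 ▸ le_iSup g x) (zero_le)
    have hint : ∫⁻ x, g x = 0 := by simp [this]
    rw [hint, ENNReal.zero_rpow_of_pos ht0, mul_zero]
    exact zero_le
  have hfbd : ∀ x, f x ≤ Sf := fun x => le_iSup f x
  have hgbd : ∀ x, g x ≤ Sg := fun x => le_iSup g x
  have hfne : ∀ x, f x ≠ ∞ := fun x => ((hfbd x).trans_lt (lt_top_iff_ne_top.mpr hSf)).ne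
  have hgne : ∀ x, g x ≠ ∞ := fun x => ((hgbd x).trans_lt (lt_top_iff_ne_top.mpr hSg)).ne
  set c : ℝ≥0∞ := Sf ^ (1-t) * Sg ^ t with hcdef
  have hc0 : c ≠ 0 := by
    apply mul_ne_zero
    · exact (ENNReal.rpow_pos (lt_of_le_of_ne (zero_le) (Ne.symm hSf0)) hSf).ne'
    · exact (ENNReal.rpow_pos (lt_of_le_of_ne (zero_le) (Ne.symm hSg0)) hSg).ne'
  have hcne : c ≠ ∞ := by
    apply ENNReal.mul_ne_top
    · exact (ENNReal.rpow_lt_top_of_nonneg h1t.le hSf).ne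
    · exact (ENNReal.rpow_lt_top_of_nonneg ht0.le hSg).ne
  set F : ℝ → ℝ≥0∞ := fun x => Sf⁻¹ * f x with hFdef
  set G : ℝ → ℝ≥0∞ := fun x => Sg⁻¹ * g x with hGdef
  set H : ℝ → ℝ≥0∞ := fun x => c⁻¹ * h x with hHdef
  have hFm : Measurable F := hf.const_mul _
  have hGm : Measurable G := hg.const_mul _
  have hHm : Measurable H := hh.const_mul _
  have hFs : ⨆ x, F x = 1 := by
    rw [hFdef]
    simp only []
    rw [← ENNReal.mul_iSup, ← hSfdef, ENNReal.inv_mul_cancel hSf0 hSf]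
  have hGs : ⨆ x, G x = 1 := by
    rw [hGdef]
    simp only []
    rw [← ENNReal.mul_iSup, ← hSgdef, ENNReal.inv_mul_cancel hSg0 hSg]
  have hypFG : ∀ x y, F x ^ (1-t) * G y ^ t ≤ H ((1-t)*x + t*y) := by
    intro x y
    have e1 : F x ^ (1-t) * G y ^ t = c⁻¹ * (f x ^ (1-t) * g y ^ t) := by
      rw [hFdef, hGdef]
      simp only []
      rw [ENNReal.mul_rpow_of_ne_top (by simpa using hSf0) (hfne x),
        ENNReal.mul_rpow_of_ne_top (by simpa using hSg0) (hgne y),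
        ENNReal.inv_rpow, ENNReal.inv_rpow, hcdef,
        ENNReal.mul_inv (Or.inl (ENNReal.rpow_pos (lt_of_le_of_ne (zero_le) (Ne.symm hSf0)) hSf).ne')
          (Or.inr (ENNReal.rpow_pos (lt_of_le_of_ne (zero_le) (Ne.symm hSg0)) hSg).ne')]
      ring
    rw [e1, hHdef]
    exact mul_le_mul_right (hyp x y) _
  have core := oneDim_PL_core ht0 ht1 F G H hFm hGm hHm hFs hGs hypFG
  rw [hFdef, hGdef, hHdef] at core
  simp only [] at core
  rw [lintegral_const_mul _ hf, lintegral_const_mul _ hg, lintegral_const_mul _ hh] at core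
  -- now core : ofReal(1-t) * (Sf⁻¹ * ∫f) + ofReal t * (Sg⁻¹ * ∫g) ≤ c⁻¹ * ∫h
  rcases eq_or_ne (∫⁻ x, h x) ∞ with hIh | hIh
  · rw [hIh]; exact le_top
  rcases eq_or_ne (∫⁻ x, f x) ∞ with hIf | hIf
  · exfalso
    rw [hIf, ENNReal.mul_top (ENNReal.inv_ne_zero.mpr hSf),
      ENNReal.mul_top (ENNReal.ofReal_pos.mpr h1t).ne', top_add] at core
    exact (ENNReal.mul_ne_top (ENNReal.inv_ne_top.mpr hc0) hIh) (top_le_iff.mp core)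
  rcases eq_or_ne (∫⁻ x, g x) ∞ with hIg | hIg
  · exfalso
    rw [hIg, ENNReal.mul_top (ENNReal.inv_ne_zero.mpr hSg),
      ENNReal.mul_top (ENNReal.ofReal_pos.mpr ht0).ne', add_top] at core
    exact (ENNReal.mul_ne_top (ENNReal.inv_ne_top.mpr hc0) hIh) (top_le_iff.mp core)
  -- main case
  have efin : Sf⁻¹ * (∫⁻ x, f x) ≠ ∞ := ENNReal.mul_ne_top (by simpa using hSf0) hIf
  have gfin : Sg⁻¹ * (∫⁻ x, g x) ≠ ∞ := ENNReal.mul_ne_top (by simpa using hSg0) hIg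
  have amgm := ennreal_amgm ht0 ht1 _ _ efin gfin
  have step : (Sf⁻¹ * ∫⁻ x, f x) ^ (1-t) * (Sg⁻¹ * ∫⁻ x, g x) ^ t ≤ c⁻¹ * ∫⁻ x, h x :=
    le_trans amgm core
  have expand : (∫⁻ x, f x) ^ (1-t) * (∫⁻ x, g x) ^ t
      = c * ((Sf⁻¹ * ∫⁻ x, f x) ^ (1-t) * (Sg⁻¹ * ∫⁻ x, g x) ^ t) := by
    rw [ENNReal.mul_rpow_of_ne_top (by simpa using hSf0) hIf,
      ENNReal.mul_rpow_of_ne_top (by simpa using hSg0) hIg,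
      ENNReal.inv_rpow, ENNReal.inv_rpow, hcdef]
    rw [show Sf ^ (1-t) * Sg ^ t * ((Sf ^ (1-t))⁻¹ * (∫⁻ x, f x) ^ (1-t) *
        ((Sg ^ t)⁻¹ * (∫⁻ x, g x) ^ t))
      = (Sf ^ (1-t) * (Sf ^ (1-t))⁻¹) * (Sg ^ t * (Sg ^ t)⁻¹) *
        ((∫⁻ x, f x) ^ (1-t) * (∫⁻ x, g x) ^ t) by ring]
    rw [ENNReal.mul_inv_cancel (ENNReal.rpow_pos (lt_of_le_of_ne (zero_le) (Ne.symm hSf0)) hSf).ne'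
        (ENNReal.rpow_lt_top_of_nonneg h1t.le hSf).ne,
      ENNReal.mul_inv_cancel (ENNReal.rpow_pos (lt_of_le_of_ne (zero_le) (Ne.symm hSg0)) hSg).ne'
        (ENNReal.rpow_lt_top_of_nonneg ht0.le hSg).ne, one_mul, one_mul]
  rw [expand]
  calc c * ((Sf⁻¹ * ∫⁻ x, f x) ^ (1-t) * (Sg⁻¹ * ∫⁻ x, g x) ^ t)
      ≤ c * (c⁻¹ * ∫⁻ x, h x) := mul_le_mul_right step _
    _ = (c * c⁻¹) * ∫⁻ x, h x := by ring
    _ = ∫⁻ x, h x := by rw [ENNReal.mul_inv_cancel hc0 hcne, one_mul]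

/-- Prékopa–Leindler property of a measure space with real scalar action. -/
def IsPLSpace (E : Type*) [MeasureSpace E] [AddCommMonoid E] [Module ℝ E] : Prop :=
  ∀ t : ℝ, 0 < t → t < 1 → ∀ f g h : E → ℝ≥0∞, Measurable f → Measurable g → Measurable h →
    (∀ x y, f x ^ (1-t) * g y ^ t ≤ h ((1-t) • x + t • y)) →
    (∫⁻ x, f x) ^ (1-t) * (∫⁻ x, g x) ^ t ≤ ∫⁻ x, h x

lemma isPLSpace_real : IsPLSpace ℝ := by
  intro t ht0 ht1 f g h hf hg hh hyp
  have h1t : (0:ℝ) < 1 - t := by linarith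
  -- truncations
  set fN : ℕ → ℝ → ℝ≥0∞ := fun N x => min (f x) N with hfNdef
  set gN : ℕ → ℝ → ℝ≥0∞ := fun N x => min (g x) N with hgNdef
  have hfNm : ∀ N, Measurable (fN N) := fun N => hf.min measurable_const
  have hgNm : ∀ N, Measurable (gN N) := fun N => hg.min measurable_const
  have hfNmono : Monotone fN := fun N M hNM x => by
    exact min_le_min le_rfl (by exact_mod_cast Nat.cast_le.mpr hNM)
  have hgNmono : Monotone gN := fun N M hNM x => by
    exact min_le_min le_rfl (by exact_mod_cast Nat.cast_le.mpr hNM)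
  have hfNsup : ∀ x, (⨆ N, fN N x) = f x := by
    intro x
    apply le_antisymm (iSup_le fun N => min_le_left _ _)
    rcases eq_or_ne (f x) ∞ with hfx | hfx
    · rw [hfx]
      calc (⊤:ℝ≥0∞) = ⨆ N : ℕ, (N:ℝ≥0∞) := (ENNReal.iSup_natCast).symm
        _ ≤ ⨆ N, fN N x := by
            apply iSup_mono
            intro N
            show (N:ℝ≥0∞) ≤ f x ⊓ N
            rw [hfx]
            simp
    · obtain ⟨N, hN⟩ := ENNReal.exists_nat_gt hfx
      calc f x = fN N x := by
            show f x = f x ⊓ N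
            simp [min_eq_left hN.le]
        _ ≤ ⨆ N, fN N x := le_iSup (fun N => fN N x) N
  have hgNsup : ∀ x, (⨆ N, gN N x) = g x := by
    intro x
    apply le_antisymm (iSup_le fun N => min_le_left _ _)
    rcases eq_or_ne (g x) ∞ with hgx | hgx
    · rw [hgx]
      calc (⊤:ℝ≥0∞) = ⨆ N : ℕ, (N:ℝ≥0∞) := (ENNReal.iSup_natCast).symm
        _ ≤ ⨆ N, gN N x := by
            apply iSup_mono
            intro N
            show (N:ℝ≥0∞) ≤ g x ⊓ N
            rw [hgx]
            simp
    · obtain ⟨N, hN⟩ := ENNReal.exists_nat_gt hgx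
      calc g x = gN N x := by
            show g x = g x ⊓ N
            simp [min_eq_left hN.le]
        _ ≤ ⨆ N, gN N x := le_iSup (fun N => gN N x) N
  have hIf : (∫⁻ x, f x) = ⨆ N, ∫⁻ x, fN N x := by
    rw [← lintegral_iSup hfNm (fun N M hNM => hfNmono hNM)]
    exact lintegral_congr fun x => (hfNsup x).symm
  have hIg : (∫⁻ x, g x) = ⨆ N, ∫⁻ x, gN N x := by
    rw [← lintegral_iSup hgNm (fun N M hNM => hgNmono hNM)]
    exact lintegral_congr fun x => (hgNsup x).symm
  have each : ∀ N, (∫⁻ x, fN N x) ^ (1-t) * (∫⁻ x, gN N x) ^ t ≤ ∫⁻ x, h x := by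
    intro N
    apply oneDim_PL_bdd ht0 ht1 _ _ _ (hfNm N) (hgNm N) hh
    · exact ((iSup_le fun x => (min_le_right _ _)).trans_lt
        (by exact ENNReal.natCast_lt_top N : (N:ℝ≥0∞) < ∞)).ne
    · exact ((iSup_le fun x => (min_le_right _ _)).trans_lt
        (by exact ENNReal.natCast_lt_top N : (N:ℝ≥0∞) < ∞)).ne
    · intro x y
      refine le_trans ?_ (by simpa [smul_eq_mul] using hyp x y)
      exact mul_le_mul' (ENNReal.rpow_le_rpow (min_le_left _ _) h1t.le)
        (ENNReal.rpow_le_rpow (min_le_left _ _) ht0.le)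
  rcases eq_or_ne (∫⁻ x, f x) 0 with hf0 | hf0
  · rw [hf0, ENNReal.zero_rpow_of_pos h1t, zero_mul]; exact zero_le
  rcases eq_or_ne (∫⁻ x, g x) 0 with hg0 | hg0
  · rw [hg0, ENNReal.zero_rpow_of_pos ht0, mul_zero]; exact zero_le
  -- limit argument
  have tendf : Tendsto (fun N => ∫⁻ x, fN N x) atTop (nhds (∫⁻ x, f x)) := by
    rw [hIf]
    exact tendsto_atTop_iSup (fun N M hNM => lintegral_mono (hfNmono hNM))
  have tendg : Tendsto (fun N => ∫⁻ x, gN N x) atTop (nhds (∫⁻ x, g x)) := by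
    rw [hIg]
    exact tendsto_atTop_iSup (fun N M hNM => lintegral_mono (hgNmono hNM))
  have tendfr : Tendsto (fun N => (∫⁻ x, fN N x) ^ (1-t)) atTop
      (nhds ((∫⁻ x, f x) ^ (1-t))) :=
    (ENNReal.continuous_rpow_const.tendsto _).comp tendf
  have tendgr : Tendsto (fun N => (∫⁻ x, gN N x) ^ t) atTop
      (nhds ((∫⁻ x, g x) ^ t)) :=
    (ENNReal.continuous_rpow_const.tendsto _).comp tendg
  have tendmul : Tendsto (fun N => (∫⁻ x, fN N x) ^ (1-t) * (∫⁻ x, gN N x) ^ t) atTop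
      (nhds ((∫⁻ x, f x) ^ (1-t) * (∫⁻ x, g x) ^ t)) := by
    apply ENNReal.Tendsto.mul tendfr ?_ tendgr ?_
    · left
      simp [ENNReal.rpow_eq_zero_iff, hf0, h1t, h1t.le, not_lt.mpr h1t.le, le_of_lt]
    · left
      simp [ENNReal.rpow_eq_zero_iff, hg0, ht0, not_lt.mpr ht0.le]
  exact le_of_tendsto tendmul (Eventually.of_forall each)

lemma isPLSpace_prod (α β : Type*) [MeasureSpace α] [AddCommMonoid α] [Module ℝ α]
    [MeasureSpace β] [AddCommMonoid β] [Module ℝ β]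
    [SigmaFinite (volume : Measure α)] [SigmaFinite (volume : Measure β)]
    (hα : IsPLSpace α) (hβ : IsPLSpace β) : IsPLSpace (α × β) := by
  intro t ht0 ht1 f g h hf hg hh hyp
  set F : α → ℝ≥0∞ := fun a => ∫⁻ b, f (a, b) with hF
  set G : α → ℝ≥0∞ := fun a => ∫⁻ b, g (a, b) with hG
  set H : α → ℝ≥0∞ := fun a => ∫⁻ b, h (a, b) with hH
  have hFm : Measurable F := Measurable.lintegral_prod_right hf
  have hGm : Measurable G := Measurable.lintegral_prod_right hg
  have hHm : Measurable H := Measurable.lintegral_prod_right hh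
  have slice : ∀ a₁ a₂, F a₁ ^ (1-t) * G a₂ ^ t ≤ H ((1-t) • a₁ + t • a₂) := by
    intro a₁ a₂
    apply hβ t ht0 ht1 (fun b => f (a₁, b)) (fun b => g (a₂, b))
      (fun b => h ((1-t) • a₁ + t • a₂, b))
      (hf.comp measurable_prodMk_left) (hg.comp measurable_prodMk_left)
      (hh.comp measurable_prodMk_left)
    intro b₁ b₂
    have := hyp (a₁, b₁) (a₂, b₂)
    simpa using this
  have main := hα t ht0 ht1 F G H hFm hGm hHm slice
  have ef : ∫⁻ z, f z = ∫⁻ a, F a := by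
    rw [hF]
    exact lintegral_prod f hf.aemeasurable
  have eg : ∫⁻ z, g z = ∫⁻ a, G a := by
    rw [hG]
    exact lintegral_prod g hg.aemeasurable
  have eh : ∫⁻ z, h z = ∫⁻ a, H a := by
    rw [hH]
    exact lintegral_prod h hh.aemeasurable
  rw [ef, eg, eh]
  exact main

lemma isPLSpace_transfer {E F : Type*} [MeasureSpace E] [AddCommMonoid E] [Module ℝ E]
    [MeasureSpace F] [AddCommMonoid F] [Module ℝ F]
    (φ : E → F) (hφm : Measurable φ)
    (hφp : MeasurePreserving φ (volume : Measure E) (volume : Measure F))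
    (hφl : ∀ (c d : ℝ) (x y : E), φ (c • x + d • y) = c • φ x + d • φ y)
    (hE : IsPLSpace E) : IsPLSpace F := by
  intro t ht0 ht1 f g h hf hg hh hyp
  have main := hE t ht0 ht1 (fun x => f (φ x)) (fun x => g (φ x)) (fun x => h (φ x))
    (hf.comp hφm) (hg.comp hφm) (hh.comp hφm) ?_
  · rwa [hφp.lintegral_comp hf, hφp.lintegral_comp hg, hφp.lintegral_comp hh] at main
  · intro x y
    simp only [hφl]
    exact hyp (φ x) (φ y)

lemma isPLSpace_pi : ∀ d : ℕ, IsPLSpace (Fin d → ℝ) := by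
  intro d
  induction d with
  | zero =>
      intro t ht0 ht1 f g h hf hg hh hyp
      have huniv : volume (univ : Set (Fin 0 → ℝ)) = 1 := by
        rw [show (volume : Measure (Fin 0 → ℝ)) = Measure.pi (fun _ => volume) from rfl,
          Measure.pi_univ]
        simp
      have hconstf : f = fun _ => f 0 := funext fun x => by rw [Subsingleton.elim x 0]
      have hconstg : g = fun _ => g 0 := funext fun x => by rw [Subsingleton.elim x 0]
      have hconsth : h = fun _ => h 0 := funext fun x => by rw [Subsingleton.elim x 0]
      rw [hconstf, hconstg, hconsth, lintegral_const, lintegral_const, lintegral_const,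
        huniv, mul_one, mul_one, mul_one]
      have := hyp 0 0
      rwa [Subsingleton.elim ((1-t) • (0 : Fin 0 → ℝ) + t • 0) 0] at this
  | succ d ih =>
      have hprod : IsPLSpace (ℝ × (Fin d → ℝ)) :=
        isPLSpace_prod _ _ isPLSpace_real ih
      set e := MeasurableEquiv.piFinSuccAbove (fun _ : Fin (d+1) => ℝ) 0 with he
      refine isPLSpace_transfer e.symm e.symm.measurable ?_ ?_ hprod
      · exact (measurePreserving_piFinSuccAbove (fun _ : Fin (d+1) => (volume : Measure ℝ)) 0).symm
      · intro c d' x y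
        apply e.injective
        rw [e.apply_symm_apply]
        have hlin : ∀ (u v : Fin (d+1) → ℝ) (a b : ℝ),
            e (a • u + b • v) = a • e u + b • e v := fun u v a b => rfl
        rw [hlin (e.symm x) (e.symm y) c d', e.apply_symm_apply, e.apply_symm_apply]

lemma isPLSpace_euclidean (m : ℕ) : IsPLSpace (EuclideanSpace ℝ (Fin m)) := by
  have := isPLSpace_pi m
  refine isPLSpace_transfer (MeasurableEquiv.toLp 2 (Fin m → ℝ))
    (MeasurableEquiv.toLp 2 (Fin m → ℝ)).measurable
    (EuclideanSpace.volume_preserving_symm_measurableEquiv_toLp (Fin m)).symm ?_ this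
  intro c d x y
  rfl

lemma smul_set_add_dist {E : Type*} [AddCommMonoid E] [Module ℝ E] (c : ℝ) (X Y : Set E) :
    c • (X + Y) = c • X + c • Y := by
  ext z
  simp only [Set.mem_smul_set, Set.mem_add]
  constructor
  · rintro ⟨w, ⟨x, hx, y, hy, rfl⟩, rfl⟩
    exact ⟨c • x, ⟨x, hx, rfl⟩, c • y, ⟨y, hy, rfl⟩, (smul_add c x y).symm⟩
  · rintro ⟨p, ⟨x, hx, rfl⟩, q, ⟨y, hy, rfl⟩, rfl⟩
    exact ⟨x + y, ⟨x, hx, y, hy, rfl⟩, smul_add c x y⟩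

lemma mult_BM {m : ℕ} {K L : Set (EuclideanSpace ℝ (Fin m))}
    (hK : IsCompact K) (hL : IsCompact L)
    {t : ℝ} (ht0 : 0 < t) (ht1 : t < 1) :
    (volume K) ^ (1-t) * (volume L) ^ t ≤ volume ((1-t) • K + t • L) := by
  have h1t : (0:ℝ) < 1 - t := by linarith
  set M : Set (EuclideanSpace ℝ (Fin m)) := (1-t) • K + t • L with hM
  have hMc : IsCompact M := by
    apply IsCompact.add
    · exact hK.image (continuous_const_smul _)
    · exact hL.image (continuous_const_smul _)
  have hKm : MeasurableSet K := hK.isClosed.measurableSet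
  have hLm : MeasurableSet L := hL.isClosed.measurableSet
  have hMm : MeasurableSet M := hMc.isClosed.measurableSet
  set f : EuclideanSpace ℝ (Fin m) → ℝ≥0∞ := K.indicator 1 with hf
  set g : EuclideanSpace ℝ (Fin m) → ℝ≥0∞ := L.indicator 1 with hg
  set h : EuclideanSpace ℝ (Fin m) → ℝ≥0∞ := M.indicator 1 with hh
  have key := isPLSpace_euclidean m t ht0 ht1 f g h
    (measurable_const.indicator hKm) (measurable_const.indicator hLm)
    (measurable_const.indicator hMm) ?_
  · rwa [hf, hg, hh, lintegral_indicator_one hKm, lintegral_indicator_one hLm,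
      lintegral_indicator_one hMm] at key
  · intro x y
    by_cases hx : x ∈ K
    · by_cases hy : y ∈ L
      · have hmem : (1-t) • x + t • y ∈ M :=
          Set.add_mem_add (Set.smul_mem_smul_set hx) (Set.smul_mem_smul_set hy)
        rw [hf, hg, hh]
        simp [Set.indicator_of_mem hx, Set.indicator_of_mem hy, Set.indicator_of_mem hmem,
          ENNReal.one_rpow]
      · rw [hg]
        simp [Set.indicator_of_notMem hy, ENNReal.zero_rpow_of_pos ht0]
    · rw [hf]
      simp [Set.indicator_of_notMem hx, ENNReal.zero_rpow_of_pos h1t]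

/-- Minkowski's mixed-volume inequality V₍₁₎(K,L)^{n+1} ≥ Vol(K)ⁿ · Vol(L), where the
mixed volumes are the coefficients of the polynomial expansion of Vol((1−t)K + tL). -/
theorem minkowski_mixed_volume_inequality (n : ℕ)
    (K L : Set (EuclideanSpace ℝ (Fin (n + 1))))
    (hK_compact : IsCompact K) (hK_conv : Convex ℝ K) (hK_int : (interior K).Nonempty)
    (hL_compact : IsCompact L) (hL_conv : Convex ℝ L) (hL_int : (interior L).Nonempty)
    (V : ℕ → ℝ)
    (hV : ∀ t : ℝ, 0 ≤ t → t ≤ 1 →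
      (volume ((1 - t) • K + t • L)).toReal =
        ∑ k ∈ Finset.range (n + 2),
          ((n + 1).choose k : ℝ) * (1 - t) ^ (n + 1 - k) * t ^ k * V k)
    (hV0 : V 0 = (volume K).toReal)
    (hVtop : V (n + 1) = (volume L).toReal) :
    (volume K).toReal ^ n * (volume L).toReal ≤ V 1 ^ (n + 1) := by
  have hfr : Module.finrank ℝ (EuclideanSpace ℝ (Fin (n+1))) = n + 1 :=
    finrank_euclideanSpace_fin
  set a := (volume K).toReal with hadef
  set b := (volume L).toReal with hbdef
  have hKpos : (0:ℝ≥0∞) < volume K := Measure.measure_pos_of_nonempty_interior _ hK_int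
  have hKfin : volume K ≠ ∞ := hK_compact.measure_lt_top.ne
  have hLpos : (0:ℝ≥0∞) < volume L := Measure.measure_pos_of_nonempty_interior _ hL_int
  have hLfin : volume L ≠ ∞ := hL_compact.measure_lt_top.ne
  have hapos : 0 < a := ENNReal.toReal_pos hKpos.ne' hKfin
  have hbpos : 0 < b := ENNReal.toReal_pos hLpos.ne' hLfin
  set lam : ℝ := (a/b) ^ ((n+1:ℝ))⁻¹ with hlamdef
  have hlampos : 0 < lam := Real.rpow_pos_of_pos (div_pos hapos hbpos) _
  have hlampow : lam ^ (n+1) = a / b := by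
    rw [hlamdef, show ((n+1:ℝ))⁻¹ = (((n+1:ℕ):ℝ))⁻¹ by norm_num]
    exact Real.rpow_inv_natCast_pow (le_of_lt (div_pos hapos hbpos)) (Nat.succ_ne_zero n)
  have hvol_smul : ∀ (c : ℝ), 0 ≤ c → ∀ (S : Set (EuclideanSpace ℝ (Fin (n+1)))),
      volume (c • S) = ENNReal.ofReal (c^(n+1)) * volume S := by
    intro c hc S
    rw [Measure.addHaar_smul volume c S, hfr, abs_of_nonneg (pow_nonneg hc _)]
  have hLK : volume (lam • L) = volume K := by
    rw [hvol_smul lam hlampos.le L, hlampow,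
      show volume L = ENNReal.ofReal b by rw [hbdef, ENNReal.ofReal_toReal hLfin],
      ← ENNReal.ofReal_mul (by positivity), div_mul_cancel₀ _ hbpos.ne', hadef,
      ENNReal.ofReal_toReal hKfin]
  set Q : ℝ → ℝ := fun u => ∑ k ∈ Finset.range (n + 2),
      ((n + 1).choose k : ℝ) * (1 - u) ^ (n + 1 - k) * u ^ k * V k with hQdef
  set cf : ℝ → ℝ := fun t => 1 - t + t * lam with hcf
  set sf : ℝ → ℝ := fun t => t * lam / cf t with hsf
  have hcfpos : ∀ t ∈ Set.Icc (0:ℝ) 1, 0 < cf t := by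
    intro t ht
    rw [hcf]
    simp only []
    rcases lt_or_eq_of_le ht.2 with htlt | rfl
    · nlinarith [mul_nonneg ht.1 hlampos.le]
    · nlinarith [hlampos]
  -- key inequality
  have key : ∀ t ∈ Set.Ioo (0:ℝ) 1, a ≤ cf t ^ (n+1) * Q (sf t) := by
    intro t ht
    have htI : t ∈ Set.Icc (0:ℝ) 1 := ⟨ht.1.le, ht.2.le⟩
    have hc := hcfpos t htI
    have h1t : (0:ℝ) < 1 - t := by linarith [ht.2]
    have hs0 : 0 ≤ sf t := by
      rw [hsf]
      exact div_nonneg (mul_nonneg ht.1.le hlampos.le) hc.le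
    have hs1 : sf t ≤ 1 := by
      rw [hsf]
      rw [div_le_one hc, hcf]
      simp only []
      nlinarith [ht.1]
    have hset : (1-t) • K + t • (lam • L) = cf t • ((1 - sf t) • K + sf t • L) := by
      rw [smul_set_add_dist, smul_smul, smul_smul, smul_smul]
      congr 2
      · rw [hsf]
        field_simp
        rw [hcf]
        ring
      · rw [hsf]
        field_simp
    have hmbm := mult_BM hK_compact (hL_compact.image (continuous_const_smul lam))
      ht.1 ht.2
    rw [Set.image_smul] at hmbm
    rw [hLK] at hmbm
    have hvolK : (volume K) ^ (1-t) * (volume K) ^ t = volume K := by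
      rw [← ENNReal.rpow_add _ _ hKpos.ne' hKfin, sub_add_cancel, ENNReal.rpow_one]
    rw [hvolK, hset] at hmbm
    have hNs : IsCompact ((1 - sf t) • K + sf t • L) :=
      (hK_compact.image (continuous_const_smul _)).add
        (hL_compact.image (continuous_const_smul _))
    rw [hvol_smul (cf t) hc.le] at hmbm
    have hRfin : ENNReal.ofReal (cf t ^ (n+1)) * volume ((1 - sf t) • K + sf t • L) ≠ ∞ :=
      ENNReal.mul_ne_top ENNReal.ofReal_ne_top hNs.measure_lt_top.ne
    have := ENNReal.toReal_mono hRfin hmbm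
    rw [ENNReal.toReal_mul, ENNReal.toReal_ofReal (by positivity)] at this
    rw [hV (sf t) hs0 hs1] at this
    exact this
  -- derivative computation
  have hQ0 : Q 0 = V 0 := by
    rw [hQdef]
    simp only []
    rw [Finset.sum_range_succ']
    rw [Finset.sum_eq_zero fun k _ => by simp [pow_succ], zero_add]
    simp
  have hterm : ∀ k ∈ Finset.range (n+2), HasDerivAt
      (fun u : ℝ => ((n + 1).choose k : ℝ) * (1 - u) ^ (n + 1 - k) * u ^ k * V k)
      (((((n + 1).choose k : ℝ) * (((n+1-k : ℕ):ℝ) * (1-(0:ℝ))^(n+1-k-1) * (-1))) * (0:ℝ)^k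
        + (((n + 1).choose k : ℝ) * (1-(0:ℝ))^(n+1-k)) * ((k:ℝ) * (0:ℝ)^(k-1))) * V k) 0 := by
    intro k _
    have h0 : HasDerivAt (fun u : ℝ => 1 - u) (-1) 0 := (hasDerivAt_id 0).const_sub 1
    have hA := h0.pow (n+1-k)
    have hB := hasDerivAt_pow k (0:ℝ)
    exact ((hA.const_mul (((n + 1).choose k : ℝ))).mul hB).mul_const (V k)
  have hQder := HasDerivAt.sum hterm
  have hsum : (∑ k ∈ Finset.range (n+2),
      (((((n + 1).choose k : ℝ) * (((n+1-k : ℕ):ℝ) * (1-(0:ℝ))^(n+1-k-1) * (-1))) * (0:ℝ)^k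
        + (((n + 1).choose k : ℝ) * (1-(0:ℝ))^(n+1-k)) * ((k:ℝ) * (0:ℝ)^(k-1))) * V k))
      = (n+1:ℝ) * V 1 - (n+1:ℝ) * V 0 := by
    rw [Finset.sum_range_succ', Finset.sum_range_succ']
    rw [Finset.sum_eq_zero fun k _ => by simp [pow_succ], zero_add]
    simp [Nat.choose_one_right, Nat.choose_zero_right]
    push_cast
    ring
  rw [hsum] at hQder
  -- assemble derivative of phi
  have hcder : HasDerivAt cf (-1 + 1 * lam) 0 :=
    ((hasDerivAt_id 0).const_sub 1).add ((hasDerivAt_id 0).mul_const lam)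
  have hcf0 : cf 0 = 1 := by rw [hcf]; norm_num
  have hsder : HasDerivAt sf ((1 * lam * cf 0 - 0 * lam * (-1 + 1 * lam)) / cf 0 ^ 2) 0 := by
    apply HasDerivAt.div ((hasDerivAt_id 0).mul_const lam) hcder
    rw [hcf0]; norm_num
  have hsf0 : sf 0 = 0 := by rw [hsf, hcf]; norm_num
  have hQder' : HasDerivAt Q ((n+1:ℝ) * V 1 - (n+1:ℝ) * V 0) (sf 0) := by
    rw [hsf0]
    exact hQder.congr_of_eventuallyEq (Eventually.of_forall fun u => by simp [hQdef, Finset.sum_apply])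
  have hcomp := hQder'.comp 0 hsder
  have hpow := hcder.pow (n+1)
  have hphi := (hpow.mul hcomp).sub_const a
  set Dphi := (↑(n+1) * cf 0 ^ (n+1-1) * (-1 + 1 * lam)) * (Q ∘ sf) 0
      + cf 0 ^ (n+1) * (((n+1:ℝ) * V 1 - (n+1:ℝ) * V 0) *
        ((1 * lam * cf 0 - 0 * lam * (-1 + 1 * lam)) / cf 0 ^ 2)) with hDphi
  -- nonnegativity of the derivative
  have hphi0 : cf 0 ^ (n+1) * Q (sf 0) - a = 0 := by
    rw [hcf0, hsf0, hQ0, hV0]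
    norm_num
  have hslope : Tendsto (slope (fun t => cf t ^ (n+1) * (Q ∘ sf) t - a) 0) (nhdsWithin 0 (Set.Ioi 0))
      (nhds Dphi) := by
    refine (hasDerivAt_iff_tendsto_slope.mp hphi).mono_left (nhdsWithin_mono 0 ?_)
    intro x hx
    exact ne_of_gt hx
  have hDphi_nonneg : 0 ≤ Dphi := by
    refine ge_of_tendsto hslope ?_
    filter_upwards [Ioo_mem_nhdsGT_of_mem (Set.left_mem_Ico.mpr zero_lt_one)] with t ht
    have hphit : a ≤ cf t ^ (n+1) * Q (sf t) := key t ht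
    rw [slope_def_field]
    simp only [Function.comp_apply]
    rw [hcf0, hsf0, hQ0, hV0]
    apply div_nonneg _ (by simpa using ht.1.le)
    have he1 : (1:ℝ) ^ (n+1) * a = a := by norm_num
    rw [he1]
    linarith
  -- extract V 1 ≥ a / lam
  have hV1 : a / lam ≤ V 1 := by
    rw [hDphi, hcf0, Function.comp_apply, hsf0, hQ0, hV0] at hDphi_nonneg
    simp only [one_pow, mul_one, one_mul] at hDphi_nonneg
    push_cast at hDphi_nonneg
    ring_nf at hDphi_nonneg
    rw [div_le_iff₀ hlampos]
    have hnp : (0:ℝ) < (n:ℝ) + 1 := by positivity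
    nlinarith [hDphi_nonneg, hnp]
  -- conclude
  have hfinal : (a / lam) ^ (n+1) ≤ V 1 ^ (n+1) := by
    apply pow_le_pow_left₀ (by positivity) hV1 _
  have heq : (a / lam) ^ (n+1) = a ^ n * b := by
    rw [div_pow, hlampow]
    field_simp
    ring
  calc a ^ n * b = (a / lam) ^ (n+1) := heq.symm
    _ ≤ V 1 ^ (n+1) := hfinal
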